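/- Let (A,σ) be a difference ring such that A is an integral domain and K := const(A,σ) is a field. If there exists a K-embedding τ : A → S(K), then (A,σ) is constant-stable, i.e., const(A,σ^k) = const(A,σ) for every integer k ≥ 1. -/

import Mathlib

/-- Let `(A,σ)` be a difference ring such that `A` is an integral
domain and `K = const(A,σ)` is a field. If there exists a `K`-embedding
`τ : A → S(K)` then `(A,σ)` is constant-stable. -/
theorem stmt16 {A K : Type*} [CommRing A] [IsDomain A] [Algebra ℚ A] [Field K]
    (σ : A ≃+* A)
    (ι : K →+* A)
    (hιconst : ∀ c : K, σ (ι c) = ι c)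
    (hιsurj : ∀ x : A, σ x = x → ∃ c : K, x = ι c)
    (S : Filter.Germ (Filter.atTop : Filter ℕ) K ≃+*
        Filter.Germ (Filter.atTop : Filter ℕ) K)
    (hS : ∀ f : ℕ → K, S (Filter.Germ.ofFun f) = Filter.Germ.ofFun (fun n => f (n + 1)))
    (τ : A →+* Filter.Germ (Filter.atTop : Filter ℕ) K)
    (hτσ : ∀ x : A, τ (σ x) = S (τ x))
    (hτK : ∀ c : K, τ (ι c) = Filter.Germ.ofFun (fun _ => c))
    (hinj : Function.Injective τ) :
    ∀ k : ℕ, 1 ≤ k → ∀ x : A, (⇑σ)^[k] x = x → σ x = x := by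
  intro k hk x hx
  -- choose a representative f of τ x
  obtain ⟨f, hf⟩ : ∃ f : ℕ → K, τ x = Filter.Germ.ofFun f := by
    obtain ⟨f, hf⟩ := Quotient.exists_rep (τ x)
    exact ⟨f, hf.symm⟩
  -- τ (σ^[m] x) = ofFun (fun n => f (n + m))
  have key : ∀ m : ℕ, τ ((⇑σ)^[m] x) = Filter.Germ.ofFun (fun n => f (n + m)) := by
    intro m
    induction m with
    | zero => simpa using hf
    | succ m ih =>
      rw [Function.iterate_succ_apply', hτσ, ih, hS]
      congr 1
      funext n
      ring_nf
  -- eventual periodicity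
  have hper : ∀ᶠ n in (Filter.atTop : Filter ℕ), f (n + k) = f n := by
    have h1 : (Filter.Germ.ofFun (fun n => f (n + k)) :
        Filter.Germ (Filter.atTop : Filter ℕ) K) = Filter.Germ.ofFun f := by
      rw [← key k, hx, hf]
    exact Filter.Germ.coe_eq.mp h1
  obtain ⟨N, hN⟩ := Filter.eventually_atTop.mp hper
  -- every value from N on is among f N, ..., f (N + k - 1)
  have hval : ∀ n, N ≤ n → ∃ j < k, f n = f (N + j) := by
    intro n
    induction n using Nat.strong_induction_on with
    | _ n ih =>
      intro hn
      by_cases h : n < N + k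
      · exact ⟨n - N, by omega, by rw [Nat.add_sub_cancel' hn]⟩
      · obtain ⟨j, hj, hj'⟩ := ih (n - k) (by omega) (by omega)
        refine ⟨j, hj, ?_⟩
        have := hN (n - k) (by omega)
        rw [show n - k + k = n by omega] at this
        rw [this, hj']
  -- the product ∏ (x - ι (f (N+j))) maps to zero
  set P : A := ∏ j ∈ Finset.range k, (x - ι (f (N + j))) with hP
  have hτP : τ P = Filter.Germ.ofFun (fun n => ∏ j ∈ Finset.range k, (f n - f (N + j))) := by
    rw [hP, map_prod]
    have : ∀ (s : Finset ℕ),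
        (∏ j ∈ s, τ (x - ι (f (N + j)))) =
          Filter.Germ.ofFun (fun n => ∏ j ∈ s, (f n - f (N + j))) := by
      intro s
      induction s using Finset.induction_on with
      | empty => rfl
      | insert _ _ hns ih =>
        rw [Finset.prod_insert hns, ih, map_sub, hf, hτK,
          ← Filter.Germ.coe_sub, ← Filter.Germ.coe_mul]
        congr 1
        funext n
        simp [Finset.prod_insert hns]
    exact this _
  have hzero : τ P = 0 := by
    rw [hτP]
    have : (fun n => ∏ j ∈ Finset.range k, (f n - f (N + j)))
        =ᶠ[(Filter.atTop : Filter ℕ)] (fun _ => 0) := by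
      rw [Filter.eventuallyEq_iff_exists_mem]
      refine ⟨Set.Ici N, Filter.Ici_mem_atTop N, ?_⟩
      intro n hn
      obtain ⟨j, hj, hj'⟩ := hval n hn
      exact Finset.prod_eq_zero (Finset.mem_range.mpr hj) (by rw [hj']; ring)
    exact Filter.Germ.coe_eq.mpr this
  have hP0 : P = 0 := hinj (by rw [hzero, map_zero])
  obtain ⟨j, _, hj⟩ := Finset.prod_eq_zero_iff.mp hP0
  have hxι : x = ι (f (N + j)) := by linear_combination hj
  rw [hxι, hιconst]
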